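/- Cycle stability conjecture (polynomial form): every complex root λ of χ_n = P_n + Q₁ satisfies Re(λ) > 0; in particular χ_n has no roots in the closed left half of the complex plane. -/

import Mathlib

open Complex Finset

private lemma absA {t : ℝ} {l : ℂ} (ha : l.re ≤ 0) : t ≤ ‖((t:ℂ) - l)‖ := by
  have h1 : t ≤ ((t:ℂ) - l).re := by simp [Complex.sub_re]; linarith
  exact h1.trans (Complex.re_le_norm _)

private lemma bracket (c₁ c₂ c₃ : ℝ) (h1 : 0 ≤ c₁) (h2 : 0 ≤ c₂) (h3 : 0 < c₃) {l : ℂ}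
    (ha : l.re ≤ 0) :
    c₁ * ‖((c₃:ℂ) - l)‖ ≤
      ‖(((c₁:ℂ) - l) * ((c₃:ℂ) - l) - l * c₂)‖ := by
  set D : ℂ := (c₃:ℂ) - l with hDdef
  have hD : 0 < ‖D‖ := by
    rw [norm_pos_iff]
    intro h
    have := congrArg Complex.re h
    simp [hDdef, Complex.sub_re] at this
    linarith
  set z : ℂ := ((c₁:ℂ) - l) * D - l * c₂ with hzdef
  have key : c₁ * ‖D‖ * ‖D‖ ≤ (z * (starRingEnd ℂ) D).re := by
    have hsq : ‖D‖ * ‖D‖ = (c₃ - l.re)^2 + l.im^2 := by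
      rw [← sq, Complex.sq_norm]
      simp [hDdef, Complex.normSq_apply, Complex.sub_re, Complex.sub_im]
      ring
    rw [mul_assoc, hsq]
    simp only [hzdef, hDdef, Complex.mul_re, Complex.sub_re, Complex.sub_im,
      Complex.mul_im, Complex.ofReal_re, Complex.ofReal_im, Complex.conj_re, Complex.conj_im]
    nlinarith [mul_nonneg (neg_nonneg.mpr ha) (sq_nonneg (c₃ - l.re)),
      mul_nonneg (neg_nonneg.mpr ha) (sq_nonneg l.im),
      mul_nonneg h2 (mul_nonneg (neg_nonneg.mpr ha) h3.le),
      mul_nonneg h2 (sq_nonneg l.re), mul_nonneg h2 (sq_nonneg l.im)]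
  have key2 : c₁ * ‖D‖ * ‖D‖ ≤ ‖z‖ * ‖D‖ := by
    refine key.trans ((Complex.re_le_norm _).trans ?_)
    rw [norm_mul, Complex.norm_conj]
  exact le_of_mul_le_mul_right key2 hD

/-- The polynomial `P_n(λ)` of the non-autocatalytic metabolic cycle. -/
noncomputable def Pfun (n : ℕ) (θ : ℕ → ℝ) (l : ℂ) : ℂ :=
  (((θ 1 : ℂ) - l) * (((θ (n + 2) : ℂ) + (θ (n + 3) : ℂ)) - l) - (θ 1 : ℂ) * (θ (n + 2) : ℂ)) *
    (((θ n : ℂ) + (θ (n + 1) : ℂ)) - l) * ∏ i ∈ Finset.Icc 2 (n - 1), ((θ i : ℂ) - l)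

/-- The polynomial `Q₁(λ) = −(θ_{n+3} − λ) ∏_{i=1}^{n} θ_i`. -/
noncomputable def Qfun (n : ℕ) (θ : ℕ → ℝ) (l : ℂ) : ℂ :=
  -((θ (n + 3) : ℂ) - l) * ∏ i ∈ Finset.Icc 1 n, (θ i : ℂ)

/-- Cycle stability conjecture, polynomial form: every complex root of
`χ_n = P_n + Q₁` has strictly positive real part; in particular `χ_n` has no
roots in the closed left half-plane. -/
theorem cycle_stability_polynomial_form (n : ℕ) (hn : 3 ≤ n) (θ : ℕ → ℝ)
    (hθ : ∀ i, 1 ≤ i → i ≤ n + 3 → 0 < θ i) :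
    ∀ l : ℂ, Pfun n θ l + Qfun n θ l = 0 → 0 < l.re := by
  intro l hl
  by_contra hpos
  push_neg at hpos
  have hθ1 : 0 < θ 1 := hθ 1 (by omega) (by omega)
  have hθn : 0 < θ n := hθ n (by omega) (by omega)
  have hθn1 : 0 < θ (n+1) := hθ (n+1) (by omega) (by omega)
  have hθn2 : 0 < θ (n+2) := hθ (n+2) (by omega) (by omega)
  have hθn3 : 0 < θ (n+3) := hθ (n+3) (by omega) (by omega)
  set D : ℂ := (θ (n+3) : ℂ) - l with hDdef
  have hD : 0 < ‖D‖ := lt_of_lt_of_le hθn3 (absA hpos)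
  -- product bounds
  have hprodpos : 0 < ∏ i ∈ Finset.Icc 2 (n-1), θ i :=
    Finset.prod_pos (fun i hi => by
      simp only [Finset.mem_Icc] at hi; exact hθ i (by omega) (by omega))
  have hprodle : ∏ i ∈ Finset.Icc 2 (n-1), θ i ≤
      ∏ i ∈ Finset.Icc 2 (n-1), ‖((θ i : ℂ) - l)‖ := by
    apply Finset.prod_le_prod
    · intro i hi
      simp only [Finset.mem_Icc] at hi
      exact (hθ i (by omega) (by omega)).le
    · intro i hi
      exact absA hpos
  -- rewrite Pfun with the bracket in the better form
  have hP : Pfun n θ l =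
      (((θ 1 : ℂ) - l) * D - l * (θ (n+2) : ℂ)) *
        (((θ n : ℂ) + (θ (n+1) : ℂ)) - l) * ∏ i ∈ Finset.Icc 2 (n - 1), ((θ i : ℂ) - l) := by
    have hbr : ((θ 1:ℂ) - l) * (((θ (n+2):ℂ) + (θ (n+3):ℂ)) - l) - (θ 1:ℂ)*(θ (n+2):ℂ)
        = ((θ 1:ℂ) - l) * D - l * (θ (n+2):ℂ) := by
      rw [hDdef]; ring
    unfold Pfun
    rw [hbr]
  -- lower bound on |Pfun|
  have habsP : θ 1 * ‖D‖ * (θ n + θ (n+1)) * (∏ i ∈ Finset.Icc 2 (n-1), θ i)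
      ≤ ‖(Pfun n θ l)‖ := by
    rw [hP, norm_mul, norm_mul, norm_prod]
    have h1 := bracket (θ 1) (θ (n+2)) (θ (n+3)) hθ1.le hθn2.le hθn3 hpos
    have h2 : (θ n + θ (n+1) : ℝ) ≤ ‖(((θ n : ℂ) + (θ (n+1) : ℂ)) - l)‖ := by
      have := absA (t := θ n + θ (n+1)) hpos
      rwa [Complex.ofReal_add] at this
    rw [← hDdef] at h1
    have hnn1 : (0:ℝ) ≤ θ 1 * ‖D‖ := by positivity
    have hnn2 : (0:ℝ) ≤ θ n + θ (n+1) := by positivity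
    calc θ 1 * ‖D‖ * (θ n + θ (n+1)) * (∏ i ∈ Finset.Icc 2 (n-1), θ i)
        ≤ ‖(((θ 1 : ℂ) - l) * D - l * (θ (n+2) : ℂ))‖ *
            ‖(((θ n : ℂ) + (θ (n+1) : ℂ)) - l)‖ *
            (∏ i ∈ Finset.Icc 2 (n-1), ‖((θ i : ℂ) - l)‖) := by
          apply mul_le_mul
          · exact mul_le_mul h1 h2 hnn2 (norm_nonneg _)
          · exact hprodle
          · exact hprodpos.le
          · positivity
      _ = _ := by ring
  -- |Qfun|
  have hsplit : ∏ i ∈ Finset.Icc 1 n, θ i =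
      θ 1 * (∏ i ∈ Finset.Icc 2 (n-1), θ i) * θ n := by
    have e1 : Finset.Icc 1 n = insert 1 (Finset.Icc 2 n) := by
      ext i; simp [Finset.mem_Icc]; omega
    have e2 : Finset.Icc 2 n = insert n (Finset.Icc 2 (n-1)) := by
      ext i; simp [Finset.mem_Icc]; omega
    rw [e1, Finset.prod_insert (by simp [Finset.mem_Icc]), e2,
      Finset.prod_insert (by simp [Finset.mem_Icc]; omega)]
    ring
  have habsQ : ‖(Qfun n θ l)‖ =
      ‖D‖ * (θ 1 * (∏ i ∈ Finset.Icc 2 (n-1), θ i) * θ n) := by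
    unfold Qfun
    rw [← hDdef, norm_mul, norm_neg, ← Complex.ofReal_prod, Complex.norm_real, Real.norm_eq_abs,
      abs_of_pos (Finset.prod_pos (fun i hi => by
        simp only [Finset.mem_Icc] at hi; exact hθ i (by omega) (by omega))), hsplit]
  -- conclude
  have heq : ‖(Pfun n θ l)‖ = ‖(Qfun n θ l)‖ := by
    have : Pfun n θ l = -(Qfun n θ l) := by linear_combination hl
    rw [this, norm_neg]
  rw [habsQ] at heq
  have hfin : ‖D‖ * (θ 1 * (∏ i ∈ Finset.Icc 2 (n-1), θ i) * θ n) <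
      θ 1 * ‖D‖ * (θ n + θ (n+1)) * (∏ i ∈ Finset.Icc 2 (n-1), θ i) := by
    have h := mul_pos (mul_pos (mul_pos hθ1 hD) hθn1) hprodpos
    nlinarith
  linarith [habsP, heq.ge, heq.le]
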